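/- For every μ ∈ (0,1), ‖R(-1 : (1/μ)A_μ)g - R(-1 : A₀)g‖²_{L²[0,π]} ≤ μ‖g‖²_{L²[0,π]} for all g ∈ L²[0,π], where (1/μ)A_μ and A₀ are the diagonal operators on the cosine basis with eigenvalues k·tanh(√μ k)/√μ and k², respectively. -/

import Mathlib

private lemma hasDerivAt_aux (y : ℝ) :
    HasDerivAt (fun t : ℝ => t * Real.cosh t - Real.sinh t) (y * Real.sinh y) y := by
  have h1 := (hasDerivAt_id y).mul (Real.hasDerivAt_cosh y)
  have h2 := Real.hasDerivAt_sinh y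
  have h3 := h1.sub h2
  exact h3.congr_deriv (by simp only [id_eq, one_mul]; ring)

private lemma tanh_le_self {x : ℝ} (hx : 0 ≤ x) : Real.tanh x ≤ x := by
  have mono : MonotoneOn (fun t : ℝ => t * Real.cosh t - Real.sinh t) (Set.Ici 0) := by
    apply monotoneOn_of_deriv_nonneg (convex_Ici 0)
    · exact ((continuous_id.mul Real.continuous_cosh).sub Real.continuous_sinh).continuousOn
    · intro y _
      exact (hasDerivAt_aux y).differentiableAt.differentiableWithinAt
    · intro y hy
      rw [interior_Ici] at hy
      rw [(hasDerivAt_aux y).deriv]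
      have hsh : 0 ≤ Real.sinh y := by
        rw [Real.sinh_eq]
        have hy' : (0:ℝ) < y := hy
        have := Real.exp_le_exp.mpr (by linarith : -y ≤ y)
        linarith
      exact mul_nonneg (le_of_lt hy) hsh
  have h0 := mono (Set.mem_Ici.mpr le_rfl) (Set.mem_Ici.mpr hx) hx
  simp only [Real.cosh_zero, Real.sinh_zero, mul_one, zero_mul, sub_zero, zero_sub, neg_zero] at h0
  have hc := Real.cosh_pos x
  rw [Real.tanh_eq_sinh_div_cosh, div_le_iff₀ hc]
  linarith

private lemma ratio_le_tanh {x : ℝ} (hx : 0 ≤ x) : x / (1 + x) ≤ Real.tanh x := by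
  have hc := Real.cosh_pos x
  have h1x : (0:ℝ) < 1 + x := by linarith
  rw [Real.tanh_eq_sinh_div_cosh, div_le_div_iff₀ h1x hc]
  rw [Real.sinh_eq, Real.cosh_eq]
  have hu : (0:ℝ) < Real.exp x := Real.exp_pos x
  have hv : (0:ℝ) < Real.exp (-x) := Real.exp_pos (-x)
  have huv : Real.exp x * Real.exp (-x) = 1 := by
    rw [← Real.exp_add]; simp
  have hexp : 2 * x + 1 ≤ Real.exp x * Real.exp x := by
    have := Real.add_one_le_exp (2 * x)
    rw [show (2:ℝ) * x = x + x by ring, Real.exp_add] at this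
    linarith
  nlinarith [mul_pos hv hv, mul_nonneg hx hv.le]

private lemma key_pointwise {s x : ℝ} (hs : 0 < s) (hx : 0 ≤ x) :
    (1 / (1 + x * Real.tanh (s * x) / s) - 1 / (1 + x ^ 2)) ^ 2 ≤ s ^ 2 := by
  set L := x * Real.tanh (s * x) / s with hLdef
  have hsx : 0 ≤ s * x := mul_nonneg hs.le hx
  have hL1 : L ≤ x ^ 2 := by
    have h := tanh_le_self hsx
    rw [hLdef, div_le_iff₀ hs]
    calc x * Real.tanh (s * x) ≤ x * (s * x) := by
          exact mul_le_mul_of_nonneg_left h hx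
      _ = x ^ 2 * s := by ring
  have hL2 : x ^ 2 / (1 + s * x) ≤ L := by
    have h := ratio_le_tanh hsx
    have h1sx : (0:ℝ) < 1 + s * x := by linarith
    have e1 : x ^ 2 / (1 + s * x) = (x / s) * (s * x / (1 + s * x)) := by
      field_simp
    have e2 : L = (x / s) * Real.tanh (s * x) := by rw [hLdef]; ring
    rw [e1, e2]
    exact mul_le_mul_of_nonneg_left h (by positivity)
  have hL0 : 0 ≤ L := le_trans (div_nonneg (sq_nonneg x) (by linarith)) hL2
  have h1L : (0:ℝ) < 1 + L := by linarith
  have h1x2 : (0:ℝ) < 1 + x ^ 2 := by positivity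
  have h1sx : (0:ℝ) < 1 + s * x := by linarith
  have hd0 : 0 ≤ 1 / (1 + L) - 1 / (1 + x ^ 2) := by
    have := one_div_le_one_div_of_le h1L (by linarith : 1 + L ≤ 1 + x ^ 2)
    linarith
  have hds : 1 / (1 + L) - 1 / (1 + x ^ 2) ≤ s := by
    have hA : (0:ℝ) < 1 + s * x + x ^ 2 := by positivity
    have step1 : 1 / (1 + L) ≤ (1 + s * x) / (1 + s * x + x ^ 2) := by
      have hge : (1 + s * x + x ^ 2) / (1 + s * x) ≤ 1 + L := by
        rw [div_le_iff₀ h1sx] at hL2 ⊢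
        nlinarith
      have hpos : (0:ℝ) < (1 + s * x + x ^ 2) / (1 + s * x) := by positivity
      calc 1 / (1 + L) ≤ 1 / ((1 + s * x + x ^ 2) / (1 + s * x)) :=
            one_div_le_one_div_of_le hpos hge
        _ = (1 + s * x) / (1 + s * x + x ^ 2) := one_div_div _ _
    have step2 : (1 + s * x) / (1 + s * x + x ^ 2) - 1 / (1 + x ^ 2) ≤ s := by
      rw [div_sub_div _ _ (ne_of_gt hA) (ne_of_gt h1x2), div_le_iff₀ (by positivity)]
      have hnum : (1 + s * x) * (1 + x ^ 2) - (1 + s * x + x ^ 2) = s * x ^ 3 := by ring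
      nlinarith [sq_nonneg (x ^ 2 - x), sq_nonneg x, mul_nonneg hs.le (sq_nonneg (x^2 - x)),
        mul_nonneg (mul_nonneg hs.le hsx) (sq_nonneg x), mul_nonneg hs.le (sq_nonneg x)]
    linarith
  nlinarith [hd0, hds]

/-- Resolvent convergence in Fourier coefficients: for μ ∈ (0,1) and g ∈ L²[0,π]
with cosine coefficients g_k, the eigenvalues of (1/μ)A_μ are
λ_μ(k) = k·tanh(√μ k)/√μ and those of A₀ are k², so
‖R(-1:(1/μ)A_μ)g - R(-1:A₀)g‖² = ∑_k (1/(1+λ_μ(k)) - 1/(1+k²))² g_k² ≤ μ‖g‖². -/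
theorem resolvent_convergence (μ : ℝ) (hμ0 : 0 < μ) (hμ1 : μ < 1)
    (g : ℕ → ℝ) (hg : Summable fun k : ℕ => (g k) ^ 2) :
    (∑' k : ℕ, (1 / (1 + (k : ℝ) * Real.tanh (Real.sqrt μ * k) / Real.sqrt μ)
        - 1 / (1 + (k : ℝ) ^ 2)) ^ 2 * (g k) ^ 2)
      ≤ μ * ∑' k : ℕ, (g k) ^ 2 := by
  have hs : 0 < Real.sqrt μ := Real.sqrt_pos.mpr hμ0
  have hs2 : Real.sqrt μ ^ 2 = μ := Real.sq_sqrt hμ0.le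
  have hpt : ∀ k : ℕ, (1 / (1 + (k : ℝ) * Real.tanh (Real.sqrt μ * k) / Real.sqrt μ)
      - 1 / (1 + (k : ℝ) ^ 2)) ^ 2 * (g k) ^ 2 ≤ μ * (g k) ^ 2 := by
    intro k
    have := key_pointwise hs (Nat.cast_nonneg k : (0:ℝ) ≤ k)
    rw [hs2] at this
    exact mul_le_mul_of_nonneg_right this (sq_nonneg _)
  rw [← tsum_mul_left]
  exact Summable.tsum_le_tsum hpt
    (Summable.of_nonneg_of_le (fun k => mul_nonneg (sq_nonneg _) (sq_nonneg _)) hpt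
      (hg.mul_left μ))
    (hg.mul_left μ)
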